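/- Let g : ℝ → ℝ be differentiable with L-Lipschitz derivative (L > 0), let a ∈ [0,1], and define d' = Proj_{[0,1]}(a - g'(a)/L) - a. Then g(a + d') ≤ g(a) - (L/2)·(d')², and moreover g(a + d') ≤ g(a) - (1/(2L))·(Proj_{[0,1]}(a - g'(a)) - a)² whenever L ≥ 1. -/

import Mathlib

lemma descent_lemma (g g' : ℝ → ℝ) (L : ℝ) (hL : 0 < L)
    (hderiv : ∀ x, HasDerivAt g (g' x) x)
    (hlip : ∀ x y, |g' x - g' y| ≤ L * |x - y|)
    (a d : ℝ) : g (a + d) ≤ g a + g' a * d + L / 2 * d ^ 2 := by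
  set φ : ℝ → ℝ := fun t => g (a + t * d) - g' a * d * t - L / 2 * d ^ 2 * t ^ 2 with hφdef
  have hφ : ∀ t : ℝ, HasDerivAt φ (g' (a + t * d) * d - g' a * d - L * d ^ 2 * t) t := by
    intro t
    have h1 : HasDerivAt (fun t : ℝ => a + t * d) d t := by
      simpa using ((hasDerivAt_id t).mul_const d).const_add a
    have h2 := (hderiv (a + t * d)).comp t h1
    have h3 : HasDerivAt (fun t : ℝ => g' a * d * t) (g' a * d) t := by
      simpa using (hasDerivAt_id t).const_mul (g' a * d)
    have h4 : HasDerivAt (fun t : ℝ => L / 2 * d ^ 2 * t ^ 2) (L / 2 * d ^ 2 * (2 * t)) t := by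
      simpa using (hasDerivAt_pow 2 t).const_mul (L / 2 * d ^ 2)
    have : HasDerivAt φ _ t := (h2.sub h3).sub h4
    convert this using 1
    ring
  have hmono : AntitoneOn φ (Set.Icc 0 1) := by
    apply antitoneOn_of_deriv_nonpos (convex_Icc (0:ℝ) 1)
    · exact fun x _ => (hφ x).continuousAt.continuousWithinAt
    · exact fun x _ => (hφ x).differentiableAt.differentiableWithinAt
    · intro x hx
      rw [interior_Icc] at hx
      rw [(hφ x).deriv]
      have hx0 : 0 < x := hx.1
      have h5 : (g' (a + x * d) - g' a) * d ≤ L * (x * d ^ 2) := by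
        calc (g' (a + x * d) - g' a) * d ≤ |(g' (a + x * d) - g' a) * d| := le_abs_self _
          _ = |g' (a + x * d) - g' a| * |d| := abs_mul _ _
          _ ≤ (L * |a + x * d - a|) * |d| :=
              mul_le_mul_of_nonneg_right (hlip (a + x * d) a) (abs_nonneg d)
          _ = L * (x * d ^ 2) := by
              rw [show a + x * d - a = x * d by ring, abs_mul, abs_of_pos hx0, ← sq_abs d]
              ring
      linarith
  have h01 := hmono (Set.left_mem_Icc.2 zero_le_one) (Set.right_mem_Icc.2 zero_le_one)
    zero_le_one
  simp only [hφdef] at h01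
  norm_num at h01
  linarith

lemma proj_ineq (a v : ℝ) (h0 : 0 ≤ a) (h1 : a ≤ 1) :
    v * (min (max (a - v) 0) 1 - a) ≤ -(min (max (a - v) 0) 1 - a) ^ 2 := by
  rcases max_cases (a - v) 0 with ⟨he, hc⟩ | ⟨he, hc⟩ <;> rw [he] <;>
    [rcases min_cases (a - v) 1 with ⟨he2, hc2⟩ | ⟨he2, hc2⟩;
     rcases min_cases (0:ℝ) 1 with ⟨he2, hc2⟩ | ⟨he2, hc2⟩] <;> rw [he2] <;> nlinarith

set_option maxHeartbeats 1000000 in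
lemma clamp_mono (a v L : ℝ) (hL : 1 ≤ L) (h0 : 0 ≤ a) (h1 : a ≤ 1) :
    (min (max (a - L * v) 0) 1 - a) ^ 2 ≤ L ^ 2 * (min (max (a - v) 0) 1 - a) ^ 2 := by
  simp only [min_def, max_def]
  split_ifs <;>
    nlinarith [sq_nonneg (L * v + 1 - a), sq_nonneg (L * v - 1 + a), sq_nonneg (v - a),
      mul_nonneg h0 h0, mul_nonneg (sub_nonneg.2 hL) (sq_nonneg v), sq_nonneg (L - 1)]

theorem projected_gradient_descent_1d (g : ℝ → ℝ) (g' : ℝ → ℝ) (L : ℝ) (hL : 0 < L)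
    (hderiv : ∀ x, HasDerivAt g (g' x) x)
    (hlip : ∀ x y, |g' x - g' y| ≤ L * |x - y|)
    (a : ℝ) (ha : a ∈ Set.Icc (0 : ℝ) 1) :
    g (a + (min (max (a - g' a / L) 0) 1 - a))
      ≤ g a - L / 2 * (min (max (a - g' a / L) 0) 1 - a) ^ 2 ∧
    (1 ≤ L →
      g (a + (min (max (a - g' a / L) 0) 1 - a))
        ≤ g a - 1 / (2 * L) * (min (max (a - g' a) 0) 1 - a) ^ 2) := by
  obtain ⟨ha0, ha1⟩ := ha
  set d := min (max (a - g' a / L) 0) 1 - a with hd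
  have hdes := descent_lemma g g' L hL hderiv hlip a d
  have hproj := proj_ineq a (g' a / L) ha0 ha1
  have hkey : g' a * d ≤ -(L * d ^ 2) := by
    have : L * (g' a / L * d) ≤ L * (-(d ^ 2)) := by
      exact mul_le_mul_of_nonneg_left hproj (le_of_lt hL)
    rw [← mul_assoc, mul_div_cancel₀ _ (ne_of_gt hL)] at this
    linarith
  clear_value d
  have hfirst : g (a + d) ≤ g a - L / 2 * d ^ 2 := by nlinarith [hdes, hkey]
  refine ⟨hfirst, fun hL1 => ?_⟩
  have hclamp := clamp_mono a (g' a / L) L hL1 ha0 ha1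
  rw [mul_div_cancel₀ _ (ne_of_gt hL), ← hd] at hclamp
  have hLpos : (0:ℝ) < 2 * L := by linarith
  have : 1 / (2 * L) * (min (max (a - g' a) 0) 1 - a) ^ 2 ≤ L / 2 * d ^ 2 := by
    calc 1 / (2 * L) * (min (max (a - g' a) 0) 1 - a) ^ 2
        ≤ 1 / (2 * L) * (L ^ 2 * d ^ 2) :=
          mul_le_mul_of_nonneg_left hclamp (by positivity)
      _ = L / 2 * d ^ 2 := by field_simp
  linarith
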